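/- Assume the number of galled networks on ℓ labelled leaves satisfies GN_ℓ ~ (sqrt(2e·e^{1/4})/4)·ℓ^{-1}·(8/e²)^ℓ·ℓ^{2ℓ} and the number of simplicial networks satisfies SN_ℓ ~ (sqrt(2·e^{1/2})/4)·ℓ^{-1}·(8/e²)^ℓ·ℓ^{2ℓ}. Then ∑_{j=1}^n C(n,j)·SN_j / ∑_{j=1}^n C(n,j)·GN_j → e^{-3/8} as n → ∞. -/

import Mathlib

open Filter Real Finset

noncomputable def Anet (ℓ : ℕ) : ℝ := (ℓ : ℝ)⁻¹ * (8 / Real.exp 1 ^ 2) ^ ℓ * (ℓ : ℝ) ^ (2 * ℓ)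

lemma Anet_pos {ℓ : ℕ} (h : 1 ≤ ℓ) : 0 < Anet ℓ := by
  have : (0:ℝ) < ℓ := by exact_mod_cast h
  have he : (0:ℝ) < Real.exp 1 ^ 2 := by positivity
  unfold Anet; positivity

lemma aux1 (E x : ℝ) (hE : E ≠ 0) (hx : x ≠ 0) (i : ℕ) :
    x⁻¹ * (8 / E) ^ (i + 1) * x ^ (2 * (i + 1)) = (8 / E) ^ (i + 1) * x ^ (2 * i + 1) := by
  rw [show 2 * (i + 1) = (2 * i + 1) + 1 by ring, pow_succ]
  field_simp; ring

lemma aux2 (E x : ℝ) (hE : 0 < E) (hx : 0 < x) (i k : ℕ) :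
    (E / (8 * x)) ^ k * (x⁻¹ * (8 / E) ^ ((i + 1) + k) * x ^ (2 * ((i + 1) + k)))
      = (8 / E) ^ (i + 1) * (x ^ k * x ^ (2 * i + 1)) := by
  rw [show 2 * ((i + 1) + k) = (((2 * i + 1) + 1) + k) + k by ring]
  rw [pow_add ((8:ℝ) / E) (i + 1) k, pow_add x, pow_add x, pow_succ x]
  rw [div_pow, div_pow, mul_pow]
  have h8 : (8:ℝ) ^ k ≠ 0 := by positivity
  have hEk : E ^ k ≠ 0 := by positivity
  field_simp
  ring_nf
  simp [hEk]

lemma key_bound (j k : ℕ) (hj : 1 ≤ j) (hk : 1 ≤ k) :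
    ((j + k).choose j : ℝ) * Anet j ≤
      (Real.exp 1 ^ 2 / (8 * ((j + k : ℕ) : ℝ))) ^ k * Anet (j + k) := by
  have hE : (0:ℝ) < Real.exp 1 ^ 2 := by positivity
  obtain ⟨i, rfl⟩ : ∃ i, j = i + 1 := ⟨j - 1, by omega⟩
  have hxj : ((i + 1 : ℕ) : ℝ) = (i : ℝ) + 1 := by push_cast; ring
  have hxn : ((i + 1 + k : ℕ) : ℝ) = ((i : ℝ) + 1) + (k : ℝ) := by push_cast; ring
  have hjpos : (0:ℝ) < (i : ℝ) + 1 := by positivity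
  have hnpos : (0:ℝ) < ((i : ℝ) + 1) + (k : ℝ) := by positivity
  have hchoose : ((i + 1 + k).choose (i + 1) : ℝ) ≤ (((i:ℝ) + 1) + (k:ℝ)) ^ k := by
    have h1 : (i + 1 + k).choose (i + 1) = (i + 1 + k).choose k := by
      rw [← Nat.choose_symm (by omega : i + 1 ≤ i + 1 + k)]; congr 1; omega
    have h2 : (i + 1 + k).choose k ≤ (i + 1 + k) ^ k := Nat.choose_le_pow _ _
    calc ((i + 1 + k).choose (i + 1) : ℝ) = ((i + 1 + k).choose k : ℝ) := by rw [h1]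
      _ ≤ ((i + 1 + k : ℕ) : ℝ) ^ k := by exact_mod_cast h2
      _ = (((i:ℝ) + 1) + (k:ℝ)) ^ k := by rw [hxn]
  unfold Anet
  rw [hxj, hxn]
  calc ((i + 1 + k).choose (i + 1) : ℝ) *
        (((i:ℝ) + 1)⁻¹ * (8 / Real.exp 1 ^ 2) ^ (i + 1) * ((i:ℝ) + 1) ^ (2 * (i + 1)))
      ≤ (((i:ℝ) + 1) + (k:ℝ)) ^ k *
        (((i:ℝ) + 1)⁻¹ * (8 / Real.exp 1 ^ 2) ^ (i + 1) * ((i:ℝ) + 1) ^ (2 * (i + 1))) := by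
        apply mul_le_mul_of_nonneg_right hchoose
        have := aux1 (Real.exp 1 ^ 2) ((i:ℝ) + 1) hE.ne' hjpos.ne' i
        rw [this]; positivity
    _ = (((i:ℝ) + 1) + (k:ℝ)) ^ k * ((8 / Real.exp 1 ^ 2) ^ (i + 1) * ((i:ℝ) + 1) ^ (2 * i + 1)) := by
        rw [aux1 (Real.exp 1 ^ 2) ((i:ℝ) + 1) hE.ne' hjpos.ne' i]
    _ ≤ (8 / Real.exp 1 ^ 2) ^ (i + 1) *
          ((((i:ℝ) + 1) + (k:ℝ)) ^ k * ((((i:ℝ) + 1) + (k:ℝ))) ^ (2 * i + 1)) := by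
        rw [show (((i:ℝ) + 1) + (k:ℝ)) ^ k * ((8 / Real.exp 1 ^ 2) ^ (i + 1) * ((i:ℝ) + 1) ^ (2 * i + 1))
          = (8 / Real.exp 1 ^ 2) ^ (i + 1) * ((((i:ℝ) + 1) + (k:ℝ)) ^ k * ((i:ℝ) + 1) ^ (2 * i + 1)) by ring]
        apply mul_le_mul_of_nonneg_left _ (by positivity)
        apply mul_le_mul_of_nonneg_left _ (by positivity)
        exact pow_le_pow_left₀ hjpos.le (by linarith [Nat.cast_nonneg (α := ℝ) k]) _
    _ = (Real.exp 1 ^ 2 / (8 * (((i:ℝ) + 1) + (k:ℝ)))) ^ k *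
          ((((i:ℝ) + 1) + (k:ℝ))⁻¹ * (8 / Real.exp 1 ^ 2) ^ (i + 1 + k) *
            ((((i:ℝ) + 1) + (k:ℝ))) ^ (2 * (i + 1 + k))) := by
        rw [aux2 (Real.exp 1 ^ 2) (((i:ℝ) + 1) + (k:ℝ)) hE hnpos i k]

lemma exp_sq_lt_8 : Real.exp 1 ^ 2 < 8 := by
  nlinarith [Real.exp_one_lt_d9, Real.exp_pos 1]

lemma tail_bound {n : ℕ} (hn : 2 ≤ n) :
    ∑ j ∈ Finset.Icc 1 (n - 1), (n.choose j : ℝ) * Anet j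
      ≤ 2 * (Real.exp 1 ^ 2 / (8 * n)) * Anet n := by
  set q : ℝ := Real.exp 1 ^ 2 / (8 * n) with hq
  have hnR : (0:ℝ) < n := by exact_mod_cast (by omega : 0 < n)
  have hq0 : 0 < q := by positivity
  have hq2 : q ≤ 1 / 2 := by
    rw [hq, div_le_div_iff₀ (by positivity) (by norm_num)]
    have h8 : Real.exp 1 ^ 2 < 8 := exp_sq_lt_8
    have : (2:ℝ) ≤ n := by exact_mod_cast hn
    nlinarith
  have hAn : 0 < Anet n := Anet_pos (by omega)
  calc ∑ j ∈ Finset.Icc 1 (n - 1), (n.choose j : ℝ) * Anet j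
      ≤ ∑ j ∈ Finset.Icc 1 (n - 1), (q * (1/2) ^ (n - 1 - j)) * Anet n := by
        apply Finset.sum_le_sum
        intro j hj
        rw [Finset.mem_Icc] at hj
        obtain ⟨hj1, hj2⟩ := hj
        have hk1 : 1 ≤ n - j := by omega
        have hjk : j + (n - j) = n := by omega
        have h1 : ((n.choose j : ℕ) : ℝ) * Anet j
            ≤ (Real.exp 1 ^ 2 / (8 * ((n : ℕ) : ℝ))) ^ (n - j) * Anet n := by
          have := key_bound j (n - j) hj1 hk1
          rwa [hjk] at this
        refine h1.trans ?_
        apply mul_le_mul_of_nonneg_right _ hAn.le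
        rw [← hq]
        have hkk : n - j = (n - 1 - j) + 1 := by omega
        rw [hkk, pow_succ]
        calc q ^ (n - 1 - j) * q ≤ (1/2) ^ (n - 1 - j) * q := by
              apply mul_le_mul_of_nonneg_right _ hq0.le
              exact pow_le_pow_left₀ hq0.le hq2 _
          _ = q * (1/2) ^ (n - 1 - j) := by ring
    _ = (q * Anet n) * ∑ j ∈ Finset.Icc 1 (n - 1), (1/2 : ℝ) ^ (n - 1 - j) := by
        rw [Finset.mul_sum]; apply Finset.sum_congr rfl; intros; ring
    _ ≤ (q * Anet n) * 2 := by
        apply mul_le_mul_of_nonneg_left _ (by positivity)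
        calc ∑ j ∈ Finset.Icc 1 (n - 1), (1/2 : ℝ) ^ (n - 1 - j)
            ≤ ∑ j ∈ Finset.range n, (1/2 : ℝ) ^ (n - 1 - j) := by
              apply Finset.sum_le_sum_of_subset_of_nonneg
              · intro x hx; rw [Finset.mem_Icc] at hx; rw [Finset.mem_range]; omega
              · intros; positivity
          _ = ∑ j ∈ Finset.range n, (1/2 : ℝ) ^ j := Finset.sum_range_reflect _ n
          _ ≤ 2 := sum_geometric_two_le n
    _ = 2 * q * Anet n := by ring

lemma core_limit (f : ℕ → ℝ) (hf : Tendsto f atTop (nhds 1)) :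
    Tendsto (fun n : ℕ => (∑ j ∈ Finset.Icc 1 n, (n.choose j : ℝ) * (Anet j * f j)) / Anet n)
      atTop (nhds 1) := by
  obtain ⟨M, hM⟩ : ∃ M : ℝ, ∀ n, |f n| ≤ M := by
    have h1 : Tendsto (fun n => |f n|) atTop (nhds |1|) := hf.abs
    obtain ⟨M, hM⟩ := h1.bddAbove_range
    exact ⟨M, fun n => hM ⟨n, rfl⟩⟩
  have hM0 : 0 ≤ M := le_trans (abs_nonneg _) (hM 0)
  have herr : Tendsto (fun n : ℕ =>
      (∑ j ∈ Finset.Icc 1 (n - 1), (n.choose j : ℝ) * (Anet j * f j)) / Anet n)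
      atTop (nhds 0) := by
    apply squeeze_zero_norm' (a := fun n : ℕ => (M * (Real.exp 1 ^ 2 / 4)) / n)
    · filter_upwards [eventually_ge_atTop 2] with n hn
      have hAn : 0 < Anet n := Anet_pos (by omega)
      have hnR : (0:ℝ) < n := by exact_mod_cast (by omega : 0 < n)
      rw [Real.norm_eq_abs, abs_div, abs_of_pos hAn, div_le_div_iff₀ hAn hnR]
      have habs : |∑ j ∈ Finset.Icc 1 (n - 1), (n.choose j : ℝ) * (Anet j * f j)|
          ≤ M * ∑ j ∈ Finset.Icc 1 (n - 1), (n.choose j : ℝ) * Anet j := by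
        calc |∑ j ∈ Finset.Icc 1 (n - 1), (n.choose j : ℝ) * (Anet j * f j)|
            ≤ ∑ j ∈ Finset.Icc 1 (n - 1), |(n.choose j : ℝ) * (Anet j * f j)| :=
              Finset.abs_sum_le_sum_abs _ _
          _ ≤ ∑ j ∈ Finset.Icc 1 (n - 1), M * ((n.choose j : ℝ) * Anet j) := by
              apply Finset.sum_le_sum
              intro j hj
              rw [Finset.mem_Icc] at hj
              have hA : 0 < Anet j := Anet_pos hj.1
              rw [abs_mul, abs_mul, abs_of_nonneg (by positivity : (0:ℝ) ≤ (n.choose j : ℝ)),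
                abs_of_pos hA]
              calc (n.choose j : ℝ) * (Anet j * |f j|) ≤ (n.choose j : ℝ) * (Anet j * M) := by
                    apply mul_le_mul_of_nonneg_left _ (by positivity)
                    exact mul_le_mul_of_nonneg_left (hM j) hA.le
                _ = M * ((n.choose j : ℝ) * Anet j) := by ring
          _ = M * ∑ j ∈ Finset.Icc 1 (n - 1), (n.choose j : ℝ) * Anet j := by
              rw [Finset.mul_sum]
      calc |∑ j ∈ Finset.Icc 1 (n - 1), (n.choose j : ℝ) * (Anet j * f j)| * n
          ≤ (M * (2 * (Real.exp 1 ^ 2 / (8 * n)) * Anet n)) * n := by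
            apply mul_le_mul_of_nonneg_right _ hnR.le
            exact habs.trans (mul_le_mul_of_nonneg_left (tail_bound hn) hM0)
        _ = M * (Real.exp 1 ^ 2 / 4) * Anet n := by field_simp; ring
    · have : Tendsto (fun n : ℕ => (M * (Real.exp 1 ^ 2 / 4)) / n) atTop (nhds 0) :=
        tendsto_const_div_atTop_nhds_zero_nat _
      exact this
  have hsplit : ∀ᶠ n : ℕ in atTop,
      (∑ j ∈ Finset.Icc 1 n, (n.choose j : ℝ) * (Anet j * f j)) / Anet n
        = f n + (∑ j ∈ Finset.Icc 1 (n - 1), (n.choose j : ℝ) * (Anet j * f j)) / Anet n := by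
    filter_upwards [eventually_ge_atTop 2] with n hn
    have hAn : (Anet n) ≠ 0 := (Anet_pos (by omega)).ne'
    obtain ⟨m, rfl⟩ : ∃ m, n = m + 1 := ⟨n - 1, by omega⟩
    rw [Finset.sum_Icc_succ_top (by omega : 1 ≤ m + 1)]
    simp only [Nat.choose_self, Nat.cast_one, one_mul, Nat.add_sub_cancel]
    rw [add_div]
    field_simp
    ring
  have : Tendsto (fun n : ℕ => f n +
      (∑ j ∈ Finset.Icc 1 (n - 1), (n.choose j : ℝ) * (Anet j * f j)) / Anet n)
      atTop (nhds 1) := by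
    have := hf.add herr
    simpa using this
  exact Tendsto.congr' (EventuallyEq.symm hsplit) this

lemma const_rel : Real.sqrt (2 * Real.exp (1/2)) / 4
    = Real.exp (-(3/8)) * (Real.sqrt (2 * Real.exp 1 * Real.exp (1/4)) / 4) := by
  have h1 : 2 * Real.exp 1 * Real.exp (1/4) = 2 * Real.exp (5/4) := by
    rw [mul_assoc, ← Real.exp_add]; norm_num
  rw [h1]
  have h2 : Real.exp (-(3/8)) = Real.sqrt (Real.exp (-(3/4))) := by
    rw [← Real.exp_half]; norm_num
  rw [h2, ← mul_div_assoc, ← Real.sqrt_mul (Real.exp_pos _).le]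
  congr 2
  rw [show Real.exp (-(3/4)) * (2 * Real.exp (5/4)) = 2 * (Real.exp (-(3/4)) * Real.exp (5/4)) by ring,
    ← Real.exp_add]
  norm_num

/- STATEMENT 8 (Proposition 2): Given the asymptotics
GN_ℓ ~ (sqrt(2e·e^{1/4})/4)·ℓ⁻¹·(8/e²)^ℓ·ℓ^{2ℓ} and
SN_ℓ ~ (sqrt(2·e^{1/2})/4)·ℓ⁻¹·(8/e²)^ℓ·ℓ^{2ℓ},
the ratio of the counts of simplicial to galled networks with leaf set any nonempty subset
of [n] tends to e^{-3/8}. -/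
theorem simplicial_over_galled_limit (GN SN : ℕ → ℝ)
    (hGN : Tendsto (fun ℓ : ℕ => GN ℓ /
        (Real.sqrt (2 * Real.exp 1 * Real.exp (1/4)) / 4 * (ℓ : ℝ)⁻¹ *
          (8 / Real.exp 1 ^ 2) ^ ℓ * (ℓ : ℝ) ^ (2 * ℓ))) atTop (nhds 1))
    (hSN : Tendsto (fun ℓ : ℕ => SN ℓ /
        (Real.sqrt (2 * Real.exp (1/2)) / 4 * (ℓ : ℝ)⁻¹ *
          (8 / Real.exp 1 ^ 2) ^ ℓ * (ℓ : ℝ) ^ (2 * ℓ))) atTop (nhds 1)) :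
    Tendsto (fun n : ℕ =>
        (∑ j ∈ Finset.Icc 1 n, (n.choose j : ℝ) * SN j) /
        (∑ j ∈ Finset.Icc 1 n, (n.choose j : ℝ) * GN j))
      atTop (nhds (Real.exp (-(3/8)))) := by
  set cG : ℝ := Real.sqrt (2 * Real.exp 1 * Real.exp (1/4)) / 4 with hcG
  set cS : ℝ := Real.sqrt (2 * Real.exp (1/2)) / 4 with hcS
  have hcGpos : 0 < cG := by
    rw [hcG]
    have : 0 < 2 * Real.exp 1 * Real.exp (1/4) := by positivity
    positivity
  have hcSpos : 0 < cS := by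
    rw [hcS]
    have : 0 < 2 * Real.exp (1/2) := by positivity
    positivity
  set g : ℕ → ℝ := fun ℓ => GN ℓ / (cG * Anet ℓ) with hg
  set s : ℕ → ℝ := fun ℓ => SN ℓ / (cS * Anet ℓ) with hs
  have hgt : Tendsto g atTop (nhds 1) := by
    have : ∀ ℓ : ℕ, cG * (ℓ:ℝ)⁻¹ * (8 / Real.exp 1 ^ 2) ^ ℓ * (ℓ:ℝ) ^ (2*ℓ) = cG * Anet ℓ := by
      intro ℓ; unfold Anet; ring
    refine hGN.congr (fun ℓ => ?_)
    rw [hg]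
    simp only [← this ℓ]
  have hst : Tendsto s atTop (nhds 1) := by
    have : ∀ ℓ : ℕ, cS * (ℓ:ℝ)⁻¹ * (8 / Real.exp 1 ^ 2) ^ ℓ * (ℓ:ℝ) ^ (2*ℓ) = cS * Anet ℓ := by
      intro ℓ; unfold Anet; ring
    refine hSN.congr (fun ℓ => ?_)
    rw [hs]
    simp only [← this ℓ]
  have hGNsum : ∀ n : ℕ, ∑ j ∈ Finset.Icc 1 n, (n.choose j : ℝ) * GN j
      = cG * ∑ j ∈ Finset.Icc 1 n, (n.choose j : ℝ) * (Anet j * g j) := by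
    intro n
    rw [Finset.mul_sum]
    apply Finset.sum_congr rfl
    intro j hj
    rw [Finset.mem_Icc] at hj
    have hA : Anet j ≠ 0 := (Anet_pos hj.1).ne'
    rw [hg]
    field_simp
  have hSNsum : ∀ n : ℕ, ∑ j ∈ Finset.Icc 1 n, (n.choose j : ℝ) * SN j
      = cS * ∑ j ∈ Finset.Icc 1 n, (n.choose j : ℝ) * (Anet j * s j) := by
    intro n
    rw [Finset.mul_sum]
    apply Finset.sum_congr rfl
    intro j hj
    rw [Finset.mem_Icc] at hj
    have hA : Anet j ≠ 0 := (Anet_pos hj.1).ne'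
    rw [hs]
    field_simp
  set Ng : ℕ → ℝ := fun n => (∑ j ∈ Finset.Icc 1 n, (n.choose j : ℝ) * (Anet j * g j)) / Anet n
    with hNg
  set Ns : ℕ → ℝ := fun n => (∑ j ∈ Finset.Icc 1 n, (n.choose j : ℝ) * (Anet j * s j)) / Anet n
    with hNs
  have hNgt : Tendsto Ng atTop (nhds 1) := core_limit g hgt
  have hNst : Tendsto Ns atTop (nhds 1) := core_limit s hst
  have hlim : Tendsto (fun n => (cS / cG) * (Ns n / Ng n)) atTop (nhds (Real.exp (-(3/8)))) := by
    have h1 : Tendsto (fun n => Ns n / Ng n) atTop (nhds 1) := by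
      have := hNst.div hNgt one_ne_zero
      rw [div_one] at this
      exact this
    have h2 := (tendsto_const_nhds (x := cS / cG) (f := atTop (α := ℕ))).mul h1
    rw [mul_one] at h2
    have h3 : cS / cG = Real.exp (-(3/8)) := by
      rw [hcS, hcG, const_rel]
      field_simp
    simp only [h3] at h2 ⊢
    exact h2
  refine Tendsto.congr' ?_ hlim
  have hNg_ev : ∀ᶠ n : ℕ in atTop, 1/2 < Ng n := hNgt.eventually (eventually_gt_nhds (by norm_num))
  filter_upwards [hNg_ev, eventually_ge_atTop 1] with n hNg2 hn1
  have hAn : 0 < Anet n := Anet_pos hn1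
  have hNgpos : 0 < Ng n := lt_trans (by norm_num) hNg2
  have hsum_ne : (∑ j ∈ Finset.Icc 1 n, (n.choose j : ℝ) * (Anet j * g j)) ≠ 0 := by
    intro h
    rw [hNg] at hNgpos
    simp only [h, zero_div] at hNgpos
    exact lt_irrefl _ hNgpos
  rw [hGNsum n, hSNsum n, hNs, hNg]
  field_simp
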